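/- For every n ≥ 0, the greedily constructed code D_{N,K}(n) coincides with the recursively defined code C_{N,K}(n). -/

import Mathlib

/-- `Produces K x z`: the input sequence `x` (numbers of particles sent per slot) can
produce the output sequence `z` (of length `x.length + K`, numbers of particles received
per slot) through the channel DTPC(·, K): there are delays `d i j` (the number of
particles sent in slot `i` that are delayed by `j ∈ {0, …, K}` slots) accounting for all
sent particles, such that the particles received in slot `t` are exactly those sent in
slot `i` and delayed by `j` slots with `i + j = t` (slots indexed from `0`). -/
def Produces (K : ℕ) (x z : List ℕ) : Prop :=
  z.length = x.length + K ∧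
  ∃ d : ℕ → ℕ → ℕ,
    (∀ i < x.length, ∑ j ∈ Finset.range (K + 1), d i j = x.getD i 0) ∧
    (∀ t < x.length + K,
      z.getD t 0 =
        ∑ i ∈ Finset.range x.length, ∑ j ∈ Finset.range (K + 1),
          if i + j = t then d i j else 0)

/-- A code of length `n` for DTPC(N, K): a set of sequences over `{0, 1, …, N}` of length `n`. -/
def IsCode (N n : ℕ) (C : Finset (List ℕ)) : Prop :=
  ∀ x ∈ C, x.length = n ∧ ∀ a ∈ x, a ≤ N

/-- Zero-error code for DTPC(N, K): for every `m ≥ 1`, no two distinct concatenations of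
`m` codewords can produce the same channel output. -/
def IsZeroError (N K n : ℕ) (C : Finset (List ℕ)) : Prop :=
  IsCode N n C ∧
  ∀ L₁ L₂ : List (List ℕ),
    L₁.length = L₂.length → 1 ≤ L₁.length →
    (∀ w ∈ L₁, w ∈ C) → (∀ w ∈ L₂, w ∈ C) →
    L₁.flatten ≠ L₂.flatten →
    ∀ z : List ℕ, ¬ (Produces K L₁.flatten z ∧ Produces K L₂.flatten z)

/-- Zero-padded code: every codeword ends with `min n K` zeros. -/
def IsZeroPadded (K n : ℕ) (C : Finset (List ℕ)) : Prop :=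
  ∀ x ∈ C, List.replicate (min n K) 0 <:+ x

/-- The recursively defined codes `C_{N,K}(n)`: for `n ≤ K` the only codeword is `0^n`;
for `n > K`, `C_{N,K}(n) = (N ∘ C_{N,K}(n-1)) ∪ ⋃_{i<N} (i ∘ 0^K ∘ C_{N,K}(n-K-1))`. -/
def CNK (N K : ℕ) : ℕ → Finset (List ℕ)
  | n =>
    if _h : n ≤ K then {List.replicate n 0}
    else
      ((CNK N K (n - 1)).image fun v => N :: v) ∪
        (Finset.range N).biUnion fun i =>
          (CNK N K (n - K - 1)).image fun v => (i :: List.replicate K 0) ++ v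
  decreasing_by
    · omega
    · omega

/-- For padded sequences of the same length: `x ⤳ y`, i.e. `x` can produce `y ∘ 0^K`. -/
def ProducesPadded (K : ℕ) (x y : List ℕ) : Prop :=
  Produces K x (y ++ List.replicate K 0)

/-- Greedy selection along a list: select the first remaining sequence `x` as a codeword,
exclude every later sequence `y` with `x ⤳ y`, and repeat. -/
def greedySelect (R : List ℕ → List ℕ → Prop) [DecidableRel R] :
    List (List ℕ) → Finset (List ℕ)
  | [] => ∅
  | x :: rest => insert x (greedySelect R (rest.filter fun y => !(decide (R x y))))
  termination_by l => l.length
  decreasing_by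
    simp_wf
    have := List.length_filter_le (fun y => !(decide (R x y))) rest
    have key : ∀ p : {y // y ∈ rest} → Bool, (rest.attach.filter p).length ≤ rest.length :=
      fun p => by simpa using List.length_filter_le p rest.attach
    first
      | omega
      | exact Nat.lt_succ_of_le (key _)
      | (have := key (fun y => !(decide (R x y))); omega)
      | (have := key (fun y => !(decide (R x y))); simp at this ⊢; omega)

/-- All sequences of length `n` over `{0, …, N}`, listed in decreasing lexicographic
order. -/
def allSeqs (N : ℕ) : ℕ → List (List ℕ)
  | 0 => [[]]
  | n + 1 => ((List.range (N + 1)).reverse).flatMap fun a => (allSeqs N n).map (a :: ·)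

/-- The greedily constructed code `D_{N,K}(n)`: list all sequences of `{0, …, N}^n`
ending with `min n K` zeros in decreasing lexicographic order and select greedily. -/
noncomputable def DNK (N K n : ℕ) : Finset (List ℕ) :=
  @greedySelect (ProducesPadded K) (fun _ _ => Classical.propDecidable _)
    ((allSeqs N n).filter fun x => decide (List.replicate (min n K) 0 <:+ x))

namespace DTPC
open Finset

/-- prefix sum -/
def S (x : List ℕ) (t : ℕ) : ℕ := (x.take t).sum

lemma S_zero (x : List ℕ) : S x 0 = 0 := rfl

lemma S_succ (x : List ℕ) (t : ℕ) : S x (t + 1) = S x t + x.getD t 0 := by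
  unfold S
  rw [List.take_succ, List.sum_append]
  congr 1
  rcases h : x[t]? with _ | a
  · simp [List.getD, h]
  · simp [List.getD, h]

lemma S_eq_sum (x : List ℕ) (t : ℕ) : S x t = ∑ i ∈ range t, x.getD i 0 := by
  induction t with
  | zero => rfl
  | succ t ih => rw [Finset.sum_range_succ, ← ih, S_succ]

lemma S_mono (x : List ℕ) : Monotone (S x) := by
  apply monotone_nat_of_le_succ
  intro t; rw [S_succ]; omega

lemma S_clamp (x : List ℕ) {t : ℕ} (h : x.length ≤ t) : S x t = x.sum := by
  unfold S; rw [List.take_of_length_le h]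

lemma S_le_sum (x : List ℕ) (t : ℕ) : S x t ≤ x.sum := by
  calc S x t ≤ S x (t + x.length) := S_mono x (by omega)
  _ = x.sum := S_clamp x (by omega)

lemma S_cons_succ (a : ℕ) (v : List ℕ) (t : ℕ) : S (a :: v) (t + 1) = a + S v t := by
  unfold S; simp

lemma S_append_replicate (v : List ℕ) (K t : ℕ) :
    S (v ++ List.replicate K 0) t = S v t := by
  unfold S
  rw [List.take_append, List.sum_append, List.take_replicate]
  simp

lemma S_replicate_append (v : List ℕ) (K t : ℕ) :
    S (List.replicate K 0 ++ v) t = S v (t - K) := by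
  unfold S
  rw [List.take_append, List.take_replicate]
  simp

lemma getD_le {x : List ℕ} {N : ℕ} (hx : ∀ a ∈ x, a ≤ N) (t : ℕ) : x.getD t 0 ≤ N := by
  rcases lt_or_ge t x.length with h | h
  · rw [List.getD_eq_getElem x 0 h]
    exact hx _ (List.getElem_mem h)
  · rw [List.getD_eq_default x 0 h]; omega

lemma S_step {x : List ℕ} {N : ℕ} (hx : ∀ a ∈ x, a ≤ N) (t : ℕ) :
    S x (t + 1) ≤ S x t + N := by
  rw [S_succ]
  have := getD_le hx t
  omega

lemma suffix_iff_S (x : List ℕ) (m : ℕ) (hm : m ≤ x.length) :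
    (List.replicate m 0 <:+ x) ↔ S x (x.length - m) = x.sum := by
  constructor
  · rintro ⟨w, rfl⟩
    have hw : w.length = (w ++ List.replicate m 0).length - m := by simp
    rw [← hw]
    unfold S
    rw [List.take_append]
    simp
  · intro h
    refine ⟨x.take (x.length - m), ?_⟩
    have h2 : (x.drop (x.length - m)).sum = 0 := by
      have := List.take_append_drop (x.length - m) x
      have hs : (x.take (x.length - m)).sum + (x.drop (x.length - m)).sum = x.sum := by
        conv_rhs => rw [← this]
        rw [List.sum_append]
      unfold S at h; omega
    have h3 : ∀ a ∈ x.drop (x.length - m), a = 0 := by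
      intro a ha
      have := List.single_le_sum (l := x.drop (x.length - m)) (by intro b _; omega) a ha
      omega
    have h4 : x.drop (x.length - m) = List.replicate m 0 := by
      apply List.eq_replicate_of_mem at h3
      rw [h3, List.length_drop]
      congr 1; omega
    rw [← h4, List.take_append_drop]

lemma suffix_zero_S_clamp {x : List ℕ} {m : ℕ} (h : List.replicate m 0 <:+ x)
    {t : ℕ} (ht : x.length - m ≤ t) : S x t = x.sum := by
  have hm : m ≤ x.length := by
    have := h.length_le; simpa using this
  have h1 := (suffix_iff_S x m hm).1 h
  have h2 := S_mono x ht
  have h3 := S_le_sum x t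
  omega

/-- realize a monotone step function as a list -/
def mkSeq (g : ℕ → ℕ) (m : ℕ) : List ℕ := (List.range m).map (fun u => g (u + 1) - g u)

lemma mkSeq_length (g : ℕ → ℕ) (m : ℕ) : (mkSeq g m).length = m := by simp [mkSeq]

lemma mkSeq_le {g : ℕ → ℕ} {m N : ℕ} (hg : ∀ u, g (u + 1) ≤ g u + N) :
    ∀ a ∈ mkSeq g m, a ≤ N := by
  intro a ha
  simp only [mkSeq, List.mem_map, List.mem_range] at ha
  obtain ⟨u, _, rfl⟩ := ha
  have := hg u; omega

lemma S_mkSeq {g : ℕ → ℕ} (hg0 : g 0 = 0) (hmono : Monotone g) (m : ℕ) (t : ℕ)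
    (ht : t ≤ m) : S (mkSeq g m) t = g t := by
  rw [S_eq_sum]
  have : ∀ i ∈ range t, (mkSeq g m).getD i 0 = g (i + 1) - g i := by
    intro i hi
    rw [Finset.mem_range] at hi
    have him : i < m := by omega
    unfold mkSeq
    rw [List.getD_eq_getElem _ _ (by simpa using him)]
    simp
  rw [Finset.sum_congr rfl this, Finset.sum_range_tsub hmono, hg0]
  omega

lemma S_mkSeq' {g : ℕ → ℕ} (hg0 : g 0 = 0) (hmono : Monotone g) {m : ℕ}
    (hconst : ∀ t, m ≤ t → g t = g m) (t : ℕ) : S (mkSeq g m) t = g t := by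
  rcases le_or_gt t m with h | h
  · exact S_mkSeq hg0 hmono m t h
  · rw [hconst t (by omega)]
    have h1 : S (mkSeq g m) t = (mkSeq g m).sum := S_clamp _ (by rw [mkSeq_length]; omega)
    have h2 : S (mkSeq g m) m = (mkSeq g m).sum := S_clamp _ (by rw [mkSeq_length])
    rw [h1, ← h2, S_mkSeq hg0 hmono m m le_rfl]


lemma S_eq_sum_min (x : List ℕ) (t : ℕ) :
    S x t = ∑ i ∈ range (min t x.length), x.getD i 0 := by
  rcases le_total t x.length with h | h
  · rw [min_eq_left h, S_eq_sum]
  · rw [min_eq_right h, ← S_eq_sum, S_clamp x h, S_clamp x le_rfl]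

theorem produces_iff {K : ℕ} {x z : List ℕ} (hz : z.length = x.length + K) :
    Produces K x z ↔ ∀ t, S z t ≤ S x t ∧ S x t ≤ S z (t + K) := by
  set n := x.length with hn
  constructor
  · rintro ⟨-, d, hd1, hd2⟩ t
    have hd2' : ∀ s, z.getD s 0 =
        ∑ i ∈ range n, ∑ j ∈ range (K + 1), if i + j = s then d i j else 0 := by
      intro s
      rcases lt_or_ge s (n + K) with h | h
      · exact hd2 s h
      · rw [List.getD_eq_default _ _ (by omega)]
        symm
        apply Finset.sum_eq_zero
        intro i hi
        apply Finset.sum_eq_zero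
        intro j hj
        rw [Finset.mem_range] at hi hj
        rw [if_neg (by omega)]
    have hSz : ∀ u, S z u =
        ∑ i ∈ range n, ∑ j ∈ range (K + 1), if i + j < u then d i j else 0 := by
      intro u
      rw [S_eq_sum, Finset.sum_congr rfl (fun s _ => hd2' s), Finset.sum_comm]
      apply Finset.sum_congr rfl
      intro i _
      rw [Finset.sum_comm]
      apply Finset.sum_congr rfl
      intro j _
      rcases lt_or_ge (i + j) u with h | h
      · rw [if_pos h]
        have : ∀ s ∈ range u, (if i + j = s then d i j else 0)
            = (if s = i + j then d i j else 0) := by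
          intro s _; congr 1; simp [eq_comm]
        rw [Finset.sum_congr rfl this,
          Finset.sum_ite_eq' (range u) (i + j) (fun _ => d i j),
          if_pos (Finset.mem_range.2 h)]
      · rw [if_neg (by omega)]
        apply Finset.sum_eq_zero
        intro s hs
        rw [Finset.mem_range] at hs
        rw [if_neg (by omega)]
    have hSx : ∀ u, S x u =
        ∑ i ∈ range n, ∑ j ∈ range (K + 1), if i < u then d i j else 0 := by
      intro u
      rw [S_eq_sum_min, ← hn]
      have h1 : range (min u n) = (range n).filter (fun i => i < u) := by
        ext i; simp only [Finset.mem_range, Finset.mem_filter]; omega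
      rw [h1, Finset.sum_filter]
      apply Finset.sum_congr rfl
      intro i hi
      split_ifs with hcond
      · exact (hd1 i (Finset.mem_range.1 hi)).symm
      · simp
    constructor
    · rw [hSz, hSx]
      apply Finset.sum_le_sum
      intro i _
      apply Finset.sum_le_sum
      intro j _
      split_ifs <;> omega
    · rw [hSz, hSx]
      apply Finset.sum_le_sum
      intro i _
      apply Finset.sum_le_sum
      intro j hj
      rw [Finset.mem_range] at hj
      split_ifs <;> omega
  · intro h
    refine ⟨hz, fun i j => min (S x (i+1)) (S z (i+j+1)) - max (S x i) (S z (i+j)), ?_, ?_⟩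
    · intro i hi
      have hmonoF : Monotone (fun j => min (S x (i+1)) (max (S x i) (S z (i+j)))) := by
        intro a b hab
        have h1 := S_mono z (show i+a ≤ i+b by omega)
        simp only
        omega
      have hterm : ∀ j ∈ range (K+1),
          min (S x (i+1)) (S z (i+j+1)) - max (S x i) (S z (i+j))
          = (fun j => min (S x (i+1)) (max (S x i) (S z (i+j)))) (j+1)
            - (fun j => min (S x (i+1)) (max (S x i) (S z (i+j)))) j := by
        intro j _
        have h1 : S z (i+j) ≤ S z (i+j+1) := S_mono z (by omega)
        have h2 : S x i ≤ S x (i+1) := S_mono x (by omega)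
        have e : S z (i+(j+1)) = S z (i+j+1) := rfl
        simp only
        rw [e]
        omega
      rw [Finset.sum_congr rfl hterm, Finset.sum_range_tsub hmonoF]
      simp only [Nat.add_zero]
      have h1 : S x (i+1) ≤ S z (i + (K+1)) := by
        have h2 := (h (i+1)).2
        have e : i + 1 + K = i + (K+1) := by omega
        rw [e] at h2; exact h2
      have h2 : S z i ≤ S x i := (h i).1
      have h3 : S x (i+1) = S x i + x.getD i 0 := S_succ x i
      omega
    · intro t ht
      have hAB : S z t ≤ S z (t+1) := S_mono z (by omega)
      have hinner : ∀ i ∈ range n,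
          (∑ j ∈ range (K+1), if i + j = t
            then min (S x (i+1)) (S z (i+j+1)) - max (S x i) (S z (i+j)) else 0)
          = (fun i => min (S z (t+1)) (max (S z t) (S x i))) (i+1)
            - (fun i => min (S z (t+1)) (max (S z t) (S x i))) i := by
        intro i hi
        rw [Finset.mem_range] at hi
        have hx1 : S x i ≤ S x (i+1) := S_mono x (by omega)
        by_cases hw : i ≤ t ∧ t ≤ i + K
        · have hcong : ∀ j ∈ range (K+1),
              (if i + j = t
                then min (S x (i+1)) (S z (i+j+1)) - max (S x i) (S z (i+j)) else 0)
              = (if j = t - i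
                then min (S x (i+1)) (S z (i+j+1)) - max (S x i) (S z (i+j)) else 0) := by
            intro j _; congr 1
            simp only [eq_iff_iff]
            omega
          rw [Finset.sum_congr rfl hcong,
            Finset.sum_ite_eq' (range (K+1)) (t-i)
              (fun j => min (S x (i+1)) (S z (i+j+1)) - max (S x i) (S z (i+j))),
            if_pos (Finset.mem_range.2 (by omega : t - i < K + 1))]
          have e : i + (t - i) = t := by omega
          rw [e]
          beta_reduce
          omega
        · have hzero : ∀ j ∈ range (K+1),
              (if i + j = t
                then min (S x (i+1)) (S z (i+j+1)) - max (S x i) (S z (i+j)) else 0) = 0 := by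
            intro j hj
            rw [Finset.mem_range] at hj
            rw [if_neg (by omega)]
          rw [Finset.sum_congr rfl hzero, Finset.sum_const_zero]
          simp only
          rcases (show t < i ∨ i + K < t by omega) with hc | hc
          · have f1 := (h (t+1)).1
            have f2 : S x (t+1) ≤ S x i := S_mono x (by omega)
            omega
          · have f1 := (h (i+1)).2
            have f2 : S z (i+1+K) ≤ S z t := S_mono z (by omega)
            omega
      have hmonoG : Monotone (fun i => min (S z (t+1)) (max (S z t) (S x i))) := by
        intro a b hab
        have h1 := S_mono x hab
        simp only
        omega
      rw [Finset.sum_congr rfl hinner, Finset.sum_range_tsub hmonoG]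
      have f3 : S z (t+1) ≤ S x (t+1) := (h (t+1)).1
      have f4 : S x (t+1) ≤ S x n := by
        rcases le_total (t+1) n with hc | hc
        · exact S_mono x hc
        · rw [S_clamp x (by omega), S_clamp x (by omega)]
      have f5 : S x 0 = 0 := S_zero x
      have f6 : S z (t+1) = S z t + z.getD t 0 := S_succ z t
      omega


/-- the domination relation -/
def Dom (K : ℕ) (y x : List ℕ) : Prop :=
  x.length = y.length ∧ ∀ t, S x t ≤ S y t ∧ S y t ≤ S x (t + K)

lemma producesPadded_iff_dom {K : ℕ} {y x : List ℕ} (h : x.length = y.length) :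
    ProducesPadded K y x ↔ Dom K y x := by
  unfold ProducesPadded Dom
  have hz : (x ++ List.replicate K 0).length = y.length + K := by simp [h]
  rw [produces_iff hz]
  constructor
  · intro hc
    refine ⟨h, fun t => ?_⟩
    have h1 := (hc t).1
    have h2 := (hc t).2
    rw [S_append_replicate] at h1 h2
    exact ⟨h1, h2⟩
  · rintro ⟨-, hc⟩ t
    rw [S_append_replicate, S_append_replicate]
    exact hc t

lemma dom_refl (K : ℕ) (x : List ℕ) : Dom K x x :=
  ⟨rfl, fun t => ⟨le_rfl, S_mono x (by omega)⟩⟩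

/-- domination implies lexicographic order -/
lemma Dom.lt {K : ℕ} : ∀ {y x : List ℕ}, Dom K y x → y ≠ x → x < y := by
  intro y
  induction y with
  | nil =>
    intro x hd hne
    have : x = [] := List.eq_nil_of_length_eq_zero hd.1
    exact absurd this.symm hne
  | cons a y' ih =>
    intro x hd hne
    rcases x with _ | ⟨b, x'⟩
    · exact List.Lex.nil
    · have hab : b ≤ a := by
        have := (hd.2 1).1
        rw [S_cons_succ, S_cons_succ, S_zero, S_zero] at this
        omega
      rcases lt_or_eq_of_le hab with hlt | heq
      · exact List.Lex.rel hlt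
      · subst heq
        have hd' : Dom K y' x' := by
          refine ⟨by simpa using hd.1, fun t => ?_⟩
          have h1 := (hd.2 (t+1)).1
          have h2 := (hd.2 (t+1)).2
          rw [S_cons_succ, S_cons_succ] at h1
          have e : t + 1 + K = (t + K) + 1 := by omega
          rw [e, S_cons_succ, S_cons_succ] at h2
          omega
        have hne' : y' ≠ x' := by
          intro hcon; apply hne; rw [hcon]
        exact List.Lex.cons (ih hd' hne')

lemma CNK_le {N K n : ℕ} (h : n ≤ K) : CNK N K n = {List.replicate n 0} := by
  rw [CNK]; simp [h]

lemma CNK_mem_gt {N K n : ℕ} (h : ¬ n ≤ K) {x : List ℕ} :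
    x ∈ CNK N K n ↔ (∃ v ∈ CNK N K (n - 1), x = N :: v) ∨
      ∃ i < N, ∃ v ∈ CNK N K (n - K - 1), x = i :: (List.replicate K 0 ++ v) := by
  conv_lhs => rw [CNK]
  simp only [h, dif_neg, not_false_iff, Finset.mem_union, Finset.mem_image,
    Finset.mem_biUnion, Finset.mem_range, List.cons_append]
  constructor
  · rintro (⟨v, hv, rfl⟩ | ⟨i, hi, v, hv, rfl⟩)
    · exact Or.inl ⟨v, hv, rfl⟩
    · exact Or.inr ⟨i, hi, v, hv, rfl⟩
  · rintro (⟨v, hv, rfl⟩ | ⟨i, hi, v, hv, rfl⟩)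
    · exact Or.inl ⟨v, hv, rfl⟩
    · exact Or.inr ⟨i, hi, v, hv, rfl⟩

/-- basic properties of CNK members -/
lemma cnk_spec (N K : ℕ) : ∀ n, ∀ x ∈ CNK N K n,
    x.length = n ∧ (∀ a ∈ x, a ≤ N) ∧ List.replicate (min n K) 0 <:+ x := by
  intro n
  induction n using Nat.strong_induction_on with
  | _ n ih =>
    intro x hx
    rcases le_or_gt n K with h | h
    · rw [CNK_le h, Finset.mem_singleton] at hx
      subst hx
      refine ⟨List.length_replicate, ?_, ?_⟩
      · intro a ha
        rw [List.eq_of_mem_replicate ha]; omega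
      · rw [min_eq_left h]
    · rw [CNK_mem_gt (by omega)] at hx
      have hminK : min n K = K := by omega
      rcases hx with ⟨v, hv, rfl⟩ | ⟨i, hi, v, hv, rfl⟩
      · obtain ⟨hl, he, hs⟩ := ih (n-1) (by omega) v hv
        refine ⟨by simp [hl]; omega, ?_, ?_⟩
        · intro a ha
          rcases List.mem_cons.1 ha with rfl | ha
          · exact le_rfl
          · exact he a ha
        · rw [hminK]
          have : min (n-1) K = K := by omega
          rw [this] at hs
          exact hs.trans (List.suffix_cons N v)
      · obtain ⟨hl, he, hs⟩ := ih (n-K-1) (by omega) v hv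
        refine ⟨?_, ?_, ?_⟩
        · simp [hl]; omega
        · intro a ha
          rcases List.mem_cons.1 ha with rfl | ha
          · omega
          · rcases List.mem_append.1 ha with ha | ha
            · rw [List.eq_of_mem_replicate ha]; omega
            · exact he a ha
        · rw [hminK]
          rcases le_or_gt K (n - K - 1) with hm | hm
          · rw [min_eq_right hm] at hs
            refine hs.trans (?_ : v <:+ _)
            exact (List.suffix_append _ v).trans (List.suffix_cons i _)
          · rw [min_eq_left (by omega)] at hs
            have hveq : v = List.replicate (n-K-1) 0 := by
              obtain ⟨w, hw⟩ := hs
              have hwl : w.length = 0 := by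
                have := congrArg List.length hw
                simp at this; omega
              rw [List.eq_nil_of_length_eq_zero hwl] at hw
              simpa using hw.symm
            subst hveq
            rw [← List.replicate_add]
            refine List.IsSuffix.trans ?_ (List.suffix_cons i _)
            have : K + (n - K - 1) = (n - K - 1) + K := by omega
            rw [this, List.replicate_add]
            exact List.suffix_append _ _


/-- distinct CNK codewords do not dominate each other -/
lemma cnk_no_dom (N K : ℕ) : ∀ n, ∀ y ∈ CNK N K n, ∀ x ∈ CNK N K n, Dom K y x → y = x := by
  intro n
  induction n using Nat.strong_induction_on with
  | _ n ih =>
    intro y hy x hx hd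
    rcases le_or_gt n K with h | h
    · rw [CNK_le h, Finset.mem_singleton] at hy hx
      rw [hy, hx]
    · rw [CNK_mem_gt (by omega)] at hy hx
      rcases hy with ⟨v, hv, rfl⟩ | ⟨i, hi, v, hv, rfl⟩ <;>
        rcases hx with ⟨w, hw, rfl⟩ | ⟨j, hj, w, hw, rfl⟩
      · -- N :: v vs N :: w
        have hd' : Dom K v w := by
          refine ⟨by simpa using hd.1, fun t => ?_⟩
          have h1 := (hd.2 (t+1)).1
          have h2 := (hd.2 (t+1)).2
          rw [S_cons_succ, S_cons_succ] at h1
          rw [show t + 1 + K = (t + K) + 1 from by omega, S_cons_succ, S_cons_succ] at h2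
          omega
        rw [ih (n-1) (by omega) v hv w hw hd']
      · -- N :: v vs j :: (rep ++ w) : impossible
        exfalso
        have h2 := (hd.2 1).2
        rw [show (1:ℕ) + K = K + 1 from by omega, S_cons_succ, S_cons_succ, S_zero,
          S_replicate_append, Nat.sub_self, S_zero] at h2
        omega
      · -- i :: (rep ++ v) vs N :: w : impossible
        exfalso
        have h1 := (hd.2 1).1
        rw [S_cons_succ, S_cons_succ, S_zero, S_replicate_append] at h1
        rw [show (0:ℕ) - K = 0 from by omega, S_zero] at h1
        omega
      · -- i :: (rep ++ v) vs j :: (rep ++ w)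
        have hij : i = j := by
          have h1 := (hd.2 1).1
          have h2 := (hd.2 1).2
          rw [S_cons_succ, S_cons_succ, S_replicate_append, S_replicate_append,
            show (0:ℕ) - K = 0 from by omega, S_zero, S_zero] at h1
          rw [show (1:ℕ) + K = K + 1 from by omega, S_cons_succ, S_cons_succ,
            S_replicate_append, S_replicate_append, Nat.sub_self, S_zero,
            show (0:ℕ) - K = 0 from by omega, S_zero] at h2
          omega
        subst hij
        have hd' : Dom K v w := by
          constructor
          · have := hd.1; simpa using this
          · intro t
            have h1 := (hd.2 (t+K+1)).1
            have h2 := (hd.2 (t+K+1)).2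
            rw [S_cons_succ, S_cons_succ, S_replicate_append, S_replicate_append,
              show t + K - K = t from by omega] at h1
            rw [show t + K + 1 + K = (t + K + K) + 1 from by omega, S_cons_succ,
              S_cons_succ, S_replicate_append, S_replicate_append,
              show t + K + K - K = t + K from by omega,
              show t + K - K = t from by omega] at h2
            omega
        rw [ih (n-K-1) (by omega) v hv w hw hd']

/-- every admissible padded word is dominated by a codeword -/
lemma cnk_covers (N K : ℕ) (hN : 1 ≤ N) : ∀ n, ∀ x : List ℕ, x.length = n →
    (∀ a ∈ x, a ≤ N) → List.replicate (min n K) 0 <:+ x →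
    ∃ y ∈ CNK N K n, Dom K y x := by
  intro n
  induction n using Nat.strong_induction_on with
  | _ n ih =>
    intro x hlen he hpad
    rcases le_or_gt n K with h | h
    · have hx : x = List.replicate n 0 := by
        rw [min_eq_left h] at hpad
        obtain ⟨w, hw⟩ := hpad
        have hw0 : w.length = 0 := by
          have hl := congrArg List.length hw
          rw [List.length_append, List.length_replicate, hlen] at hl
          omega
        rw [List.eq_nil_of_length_eq_zero hw0] at hw
        simpa using hw.symm
      subst hx
      exact ⟨_, by rw [CNK_le h]; exact Finset.mem_singleton_self _, dom_refl K _⟩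
    · have hminK : min n K = K := by omega
      rw [hminK] at hpad
      have hxclamp : ∀ t, n - K ≤ t → S x t = x.sum := by
        intro t ht
        exact suffix_zero_S_clamp hpad (by rw [hlen]; omega)
      rcases lt_or_ge (S x (K+1)) N with hc | hc
      · -- case: small first block, y = c :: 0^K ++ y₁
        have hg0 : (fun u => S x (u + K + 1) - S x (K+1)) 0 = 0 := by
          simp only [Nat.zero_add, Nat.sub_self]
        have hgmono : Monotone (fun u => S x (u + K + 1) - S x (K+1)) :=
          fun a b hab => Nat.sub_le_sub_right (S_mono x (by omega)) _
        have hgstep : ∀ u, (fun u => S x (u + K + 1) - S x (K+1)) (u+1)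
            ≤ (fun u => S x (u + K + 1) - S x (K+1)) u + N := by
          intro u
          simp only
          have h1 := S_step he (u+K+1)
          have h2 : S x (K+1) ≤ S x (u+K+1) := S_mono x (by omega)
          rw [show u + 1 + K + 1 = (u + K + 1) + 1 from by omega]
          omega
        have hgconst : ∀ t, (n - K - 1) ≤ t → (fun u => S x (u + K + 1) - S x (K+1)) t
            = (fun u => S x (u + K + 1) - S x (K+1)) (n - K - 1) := by
          intro t ht
          simp only
          rw [hxclamp (t+K+1) (by omega), hxclamp ((n-K-1)+K+1) (by omega)]
        have hS1 : ∀ t, S (mkSeq (fun u => S x (u + K + 1) - S x (K+1)) (n-K-1)) t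
            = S x (t + K + 1) - S x (K+1) := fun t => S_mkSeq' hg0 hgmono hgconst t
        have hx1len := mkSeq_length (fun u => S x (u + K + 1) - S x (K+1)) (n-K-1)
        have hx1pad : List.replicate (min (n-K-1) K) 0 <:+
            mkSeq (fun u => S x (u + K + 1) - S x (K+1)) (n-K-1) := by
          rw [suffix_iff_S _ _ (by rw [hx1len]; omega), hx1len]
          have hsum : (mkSeq (fun u => S x (u + K + 1) - S x (K+1)) (n-K-1)).sum
              = S (mkSeq (fun u => S x (u + K + 1) - S x (K+1)) (n-K-1)) (n-K-1) :=
            (S_clamp _ (by rw [hx1len])).symm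
          rw [hsum, hS1, hS1,
            hxclamp ((n-K-1) - min (n-K-1) K + K + 1) (by omega),
            hxclamp ((n-K-1)+K+1) (by omega)]
        obtain ⟨y₁, hy₁mem, hy₁dom⟩ := ih (n-K-1) (by omega) _ hx1len (mkSeq_le hgstep) hx1pad
        have hy₁len : y₁.length = n-K-1 := (cnk_spec N K (n-K-1) y₁ hy₁mem).1
        refine ⟨S x (K+1) :: (List.replicate K 0 ++ y₁), ?_, ?_, ?_⟩
        · rw [CNK_mem_gt (by omega)]
          exact Or.inr ⟨S x (K+1), hc, y₁, hy₁mem, rfl⟩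
        · simp [hlen, hy₁len]; omega
        · intro t
          rcases t with _ | t
          · exact ⟨le_rfl, Nat.zero_le _⟩
          · have hyS : S (S x (K+1) :: (List.replicate K 0 ++ y₁)) (t+1)
                = S x (K+1) + S y₁ (t - K) := by
              rw [S_cons_succ, S_replicate_append]
            rcases le_or_gt t K with htK | htK
            · rw [show t - K = 0 from by omega, S_zero] at hyS
              have f1 : S x (t+1) ≤ S x (K+1) := S_mono x (by omega)
              have f2 : S x (K+1) ≤ S x (t+1+K) := S_mono x (by omega)
              omega
            · have f0 := (hy₁dom.2 (t-K)).1
              have f0' := (hy₁dom.2 (t-K)).2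
              have g1 := hS1 (t-K)
              have g2 := hS1 (t-K+K)
              rw [show t - K + K + 1 = t + 1 from by omega] at g1
              rw [show t - K + K + K + 1 = t + 1 + K from by omega] at g2
              have f2 : S x (K+1) ≤ S x (t+1) := S_mono x (by omega)
              have f3 : S x (t+1) ≤ S x (t+1+K) := S_mono x (by omega)
              omega
      · -- case: large first block, y = N :: y₁
        have hg0 : (fun u => max (S x (u + 1)) N - N) 0 = 0 := by
          simp only [Nat.zero_add]
          have h1 := S_step he 0
          rw [S_zero, Nat.zero_add] at h1
          omega
        have hgmono : Monotone (fun u => max (S x (u + 1)) N - N) :=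
          fun a b hab => Nat.sub_le_sub_right (max_le_max (S_mono x (by omega)) le_rfl) _
        have hgstep : ∀ u, (fun u => max (S x (u + 1)) N - N) (u+1)
            ≤ (fun u => max (S x (u + 1)) N - N) u + N := by
          intro u
          simp only
          have h1 := S_step he (u+1)
          omega
        have hgconst : ∀ t, (n - 1) ≤ t → (fun u => max (S x (u + 1)) N - N) t
            = (fun u => max (S x (u + 1)) N - N) (n - 1) := by
          intro t ht
          simp only
          rw [hxclamp (t+1) (by omega), hxclamp ((n-1)+1) (by omega)]
        have hS1 : ∀ t, S (mkSeq (fun u => max (S x (u + 1)) N - N) (n-1)) t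
            = max (S x (t + 1)) N - N := fun t => S_mkSeq' hg0 hgmono hgconst t
        have hx1len := mkSeq_length (fun u => max (S x (u + 1)) N - N) (n-1)
        have hx1pad : List.replicate (min (n-1) K) 0 <:+
            mkSeq (fun u => max (S x (u + 1)) N - N) (n-1) := by
          rw [suffix_iff_S _ _ (by rw [hx1len]; omega), hx1len]
          have hsum : (mkSeq (fun u => max (S x (u + 1)) N - N) (n-1)).sum
              = S (mkSeq (fun u => max (S x (u + 1)) N - N) (n-1)) (n-1) :=
            (S_clamp _ (by rw [hx1len])).symm
          rw [hsum, hS1, hS1,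
            hxclamp ((n-1) - min (n-1) K + 1) (by omega),
            hxclamp ((n-1)+1) (by omega)]
        obtain ⟨y₁, hy₁mem, hy₁dom⟩ := ih (n-1) (by omega) _ hx1len (mkSeq_le hgstep) hx1pad
        have hy₁len : y₁.length = n-1 := (cnk_spec N K (n-1) y₁ hy₁mem).1
        refine ⟨N :: y₁, ?_, ?_, ?_⟩
        · rw [CNK_mem_gt (by omega)]
          exact Or.inl ⟨y₁, hy₁mem, rfl⟩
        · simp [hlen, hy₁len]; omega
        · intro t
          rcases t with _ | t
          · exact ⟨le_rfl, Nat.zero_le _⟩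
          · have hyS : S (N :: y₁) (t+1) = N + S y₁ t := S_cons_succ N y₁ t
            have f0 := (hy₁dom.2 t).1
            have f0' := (hy₁dom.2 t).2
            have g1 := hS1 t
            have g2 := hS1 (t+K)
            rw [show t + K + 1 = t + 1 + K from by omega] at g2
            have f1 : N ≤ S x (t+1+K) := le_trans hc (S_mono x (by omega))
            omega


lemma mem_allSeqs (N : ℕ) : ∀ n (x : List ℕ),
    x ∈ allSeqs N n ↔ x.length = n ∧ ∀ a ∈ x, a ≤ N := by
  intro n
  induction n with
  | zero =>
    intro x
    simp only [allSeqs, List.mem_singleton]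
    constructor
    · rintro rfl; simp
    · rintro ⟨h, -⟩; exact List.eq_nil_of_length_eq_zero h
  | succ n ih =>
    intro x
    simp only [allSeqs, List.mem_flatMap, List.mem_reverse, List.mem_range, List.mem_map]
    constructor
    · rintro ⟨a, ha, v, hv, rfl⟩
      obtain ⟨hl, he⟩ := (ih v).1 hv
      refine ⟨by simp [hl], ?_⟩
      intro b hb
      rcases List.mem_cons.1 hb with rfl | hb
      · omega
      · exact he b hb
    · rintro ⟨hl, he⟩
      rcases x with _ | ⟨a, v⟩
      · simp at hl
      · refine ⟨a, ?_, v, (ih v).2 ⟨by simpa using hl, fun b hb => he b (List.mem_cons_of_mem a hb)⟩, rfl⟩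
        have := he a (List.mem_cons_self)
        omega

lemma pairwise_allSeqs (N : ℕ) : ∀ n, (allSeqs N n).Pairwise (fun a b => b < a) := by
  intro n
  induction n with
  | zero => simp [allSeqs]
  | succ n ih =>
    rw [allSeqs, List.pairwise_flatMap]
    constructor
    · intro a _
      rw [List.pairwise_map]
      exact ih.imp fun h => List.Lex.cons h
    · rw [List.pairwise_reverse]
      have hpr : (List.range (N+1)).Pairwise (· < ·) := List.pairwise_lt_range
      apply hpr.imp
      intro a b hab
      intro x hx y hy
      rw [List.mem_map] at hx hy
      obtain ⟨u, -, rfl⟩ := hx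
      obtain ⟨v, -, rfl⟩ := hy
      exact List.Lex.rel hab

/-- the generic greedy fixed-point lemma -/
lemma greedy_eq (R : List ℕ → List ℕ → Prop) [DecidableRel R]
    (s : List ℕ → List ℕ → Prop) (hasym : ∀ a b, s a b → ¬ s b a) :
    ∀ (m : ℕ) (l : List (List ℕ)), l.length ≤ m → l.Pairwise s →
    ∀ C : Finset (List ℕ),
      (∀ y ∈ C, y ∈ l) →
      (∀ x ∈ l, (x ∈ C ↔ ∀ y ∈ C, s y x → ¬ R y x)) →
      greedySelect R l = C := by
  intro m
  induction m with
  | zero =>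
    intro l hl _ C hsub _
    have : l = [] := List.eq_nil_of_length_eq_zero (by omega)
    subst this
    rw [greedySelect]
    symm
    rw [Finset.eq_empty_iff_forall_notMem]
    intro y hy
    exact (List.not_mem_nil) (hsub y hy)
  | succ m ihm =>
    intro l hl hpw C hsub hfix
    rcases l with _ | ⟨a, rest⟩
    · rw [greedySelect]
      symm
      rw [Finset.eq_empty_iff_forall_notMem]
      intro y hy
      exact (List.not_mem_nil) (hsub y hy)
    · have hpwa : ∀ y ∈ rest, s a y := fun y hy => (List.pairwise_cons.1 hpw).1 y hy
      have hpwrest : rest.Pairwise s := (List.pairwise_cons.1 hpw).2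
      have haC : a ∈ C := by
        rw [hfix a (List.mem_cons_self)]
        intro y hyC hsy
        exfalso
        rcases List.mem_cons.1 (hsub y hyC) with rfl | hyr
        · exact hasym y y hsy hsy
        · exact hasym a y (hpwa y hyr) hsy
      rw [greedySelect]
      have hfilter : ∀ y, y ∈ rest.filter (fun y => !(decide (R a y))) ↔ y ∈ rest ∧ ¬ R a y := by
        intro y
        simp [List.mem_filter]
      have hrec : greedySelect R (rest.filter fun y => !(decide (R a y))) = C.erase a := by
        apply ihm
        · have := List.length_filter_le (fun y => !(decide (R a y))) rest
          simp only [List.length_cons] at hl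
          omega
        · exact hpwrest.filter _
        · intro y hy
          rw [Finset.mem_erase] at hy
          obtain ⟨hya, hyC⟩ := hy
          rw [hfilter]
          constructor
          · rcases List.mem_cons.1 (hsub y hyC) with rfl | hyr
            · exact absurd rfl hya
            · exact hyr
          · exact (hfix y (hsub y hyC)).1 hyC a haC
              (hpwa y (by rcases List.mem_cons.1 (hsub y hyC) with rfl | hyr
                          · exact absurd rfl hya
                          · exact hyr))
        · intro x hx
          rw [hfilter] at hx
          obtain ⟨hxr, hxnR⟩ := hx
          have hxa : x ≠ a := by
            intro hcon
            subst hcon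
            exact hasym x x (hpwa x hxr) (hpwa x hxr)
          constructor
          · intro hxC y hyC hsy
            rw [Finset.mem_erase] at hxC hyC
            exact (hfix x (List.mem_cons_of_mem a hxr)).1 hxC.2 y hyC.2 hsy
          · intro hcond
            rw [Finset.mem_erase]
            refine ⟨hxa, ?_⟩
            rw [hfix x (List.mem_cons_of_mem a hxr)]
            intro y hyC hsy
            by_cases hya : y = a
            · subst hya
              exact hxnR
            · refine hcond y ?_ hsy
              rw [Finset.mem_erase]
              exact ⟨hya, hyC⟩
      rw [hrec, Finset.insert_erase haC]


end DTPC

/-- The greedily constructed code coincides with the recursively defined one: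
`D_{N,K}(n) = C_{N,K}(n)` for every `n`. -/
theorem DNK_eq_CNK (N K : ℕ) (hN : 1 ≤ N) (n : ℕ) : DNK N K n = CNK N K n := by
  unfold DNK
  set l := (allSeqs N n).filter (fun x => decide (List.replicate (min n K) 0 <:+ x)) with hl
  have hmeml : ∀ x, x ∈ l ↔
      (x.length = n ∧ ∀ a ∈ x, a ≤ N) ∧ List.replicate (min n K) 0 <:+ x := by
    intro x
    rw [hl, List.mem_filter, DTPC.mem_allSeqs]
    simp
  refine @DTPC.greedy_eq (ProducesPadded K) (fun _ _ => Classical.propDecidable _) (fun a b => b < a)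
    (fun a b h => lt_asymm h) l.length l le_rfl
    ((DTPC.pairwise_allSeqs N n).filter _) (CNK N K n) ?_ ?_
  · intro x hxC
    obtain ⟨h1, h2, h3⟩ := DTPC.cnk_spec N K n x hxC
    exact (hmeml x).2 ⟨⟨h1, h2⟩, h3⟩
  · intro x hxl
    obtain ⟨⟨hxlen, hxle⟩, hxpad⟩ := (hmeml x).1 hxl
    constructor
    · intro hxC y hyC hlt hP
      have hylen : y.length = n := (DTPC.cnk_spec N K n y hyC).1
      have hdom := (DTPC.producesPadded_iff_dom (by rw [hxlen, hylen])).1 hP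
      have heq := DTPC.cnk_no_dom N K n y hyC x hxC hdom
      subst heq
      exact lt_irrefl y hlt
    · intro hcond
      by_contra hxC
      obtain ⟨y, hyC, hdom⟩ := DTPC.cnk_covers N K hN n x hxlen hxle hxpad
      have hyne : y ≠ x := fun hcon => hxC (hcon ▸ hyC)
      have hlt : x < y := DTPC.Dom.lt hdom hyne
      exact hcond y hyC hlt ((DTPC.producesPadded_iff_dom hdom.1).2 hdom)
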